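/- For any nonzero elements f, g of the free right-symmetric algebra A, the product fg is nonzero and its leading word equals the leading word of the product of the leading words of f and g: overline{fg} = overline{f̄ ḡ}. -/

import Mathlib

set_option linter.unusedSectionVars false


namespace RS

/-- The degree of a nonassociative word. -/
def deg {X : Type*} : FreeMagma X → ℕ
  | .of _ => 1
  | .mul u v => deg u + deg v

/-- The order on nonassociative words: `u < v` if `d u < d v`; words of equal degree 1 are
compared in `X`; words `u = u₁u₂`, `v = v₁v₂` of equal degree `≥ 2` are compared
lexicographically. -/
def wlt {X : Type*} [LinearOrder X] : FreeMagma X → FreeMagma X → Prop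
  | .of a, .of b => a < b
  | .of _, .mul _ _ => True
  | .mul _ _, .of _ => False
  | .mul u₁ u₂, .mul v₁ v₂ =>
      deg (FreeMagma.mul u₁ u₂) < deg (FreeMagma.mul v₁ v₂) ∨
        (deg (FreeMagma.mul u₁ u₂) = deg (FreeMagma.mul v₁ v₂) ∧
          (wlt u₁ v₁ ∨ (u₁ = v₁ ∧ wlt u₂ v₂)))

/-- `u ≤ v` on nonassociative words. -/
def wle {X : Type*} [LinearOrder X] (u v : FreeMagma X) : Prop := wlt u v ∨ u = v

/-- A word is good if it contains no subword `(rs)t` with `s > t`. -/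
def IsGood {X : Type*} [LinearOrder X] : FreeMagma X → Prop
  | .of _ => True
  | .mul (.of _) v => IsGood v
  | .mul (.mul u₁ u₂) v =>
      IsGood (FreeMagma.mul u₁ u₂) ∧ IsGood v ∧ ¬ wlt v u₂

/-- Evaluation of a nonassociative word at values `x` in a magma `A`. -/
def evalWord {X A : Type*} [Mul A] (x : X → A) : FreeMagma X → A
  | .of a => x a
  | .mul u v => evalWord x u * evalWord x v

/-- Data exhibiting a nonunital nonassociative `k`-algebra `A` as the free right-symmetric
algebra `RS⟨x_1,…,x_n⟩`: `A` satisfies the right-symmetric identity and the images of the good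
words form a `k`-linear basis (Segal's theorem). -/
structure FreeRSData (k : Type*) [Field k] (n : ℕ) (A : Type*)
    [NonUnitalNonAssocRing A] [Module k A] where
  rightSymm : ∀ a b c : A, (a * b) * c - a * (b * c) = (a * c) * b - a * (c * b)
  x : Fin n → A
  basis : Module.Basis {w : FreeMagma (Fin n) // IsGood w} k A
  basis_eq : ∀ w : {w : FreeMagma (Fin n) // IsGood w}, basis w = evalWord x w.1

/-- `w` is the leading word of `f`: it is a good word occurring in the representation of `f`
in the basis of good words, and every other good word occurring there is smaller. -/
def IsLeadingWord {k : Type*} [Field k] {n : ℕ} {A : Type*} [NonUnitalNonAssocRing A]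
    [Module k A] (D : FreeRSData k n A) (f : A) (w : FreeMagma (Fin n)) : Prop :=
  ∃ hw : IsGood w,
    (⟨w, hw⟩ : {u : FreeMagma (Fin n) // IsGood u}) ∈ (D.basis.repr f).support ∧
      ∀ u ∈ (D.basis.repr f).support, u.1 ≠ w → wlt u.1 w

/-- The left-normed word `x R_{w_1} ⋯ R_{w_m} = (…((x w_1) w_2) … w_m)`. -/
def leftNormed {X : Type*} (a : FreeMagma X) (l : List (FreeMagma X)) : FreeMagma X :=
  l.foldl FreeMagma.mul a

/-- The degree of a word in the variable `a`. -/
def countVar {X : Type*} [DecidableEq X] (a : X) : FreeMagma X → ℕ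
  | .of b => if b = a then 1 else 0
  | .mul u v => countVar a u + countVar a v

/-- The two-sided ideal of the nonunital nonassociative `k`-algebra `A` generated by `f`. -/
def idealGen (k : Type*) [Field k] {A : Type*} [NonUnitalNonAssocRing A] [Module k A]
    (f : A) : Submodule k A :=
  sInf {I : Submodule k A | f ∈ I ∧ ∀ a : A, ∀ y ∈ I, a * y ∈ I ∧ y * a ∈ I}

/-- A pair of (nonzero) elements `f, g` is reducible if there is a good word `s` in a single
variable with `s(f̄) = ḡ` or `s(ḡ) = f̄`. -/
def Reducible {k : Type*} [Field k] {n : ℕ} {A : Type*} [NonUnitalNonAssocRing A]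
    [Module k A] (D : FreeRSData k n A) (f g : A) : Prop :=
  ∃ wf wg : FreeMagma (Fin n), IsLeadingWord D f wf ∧ IsLeadingWord D g wg ∧
    ∃ s : FreeMagma Unit, IsGood s ∧
      (evalWord (fun _ => wf) s = wg ∨ evalWord (fun _ => wg) s = wf)

/-- An elementary automorphism: it fixes all generators but one, which is sent to
`α x_i + f` with `α ≠ 0` and `f` in the subalgebra generated by the other generators. -/
def IsElementary {k : Type*} [Field k] {n : ℕ} {A : Type*} [NonUnitalNonAssocRing A]
    [Module k A] [SMulCommClass k A A] [IsScalarTower k A A]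
    (D : FreeRSData k n A) (e : A →ₙₐ[k] A) : Prop :=
  Function.Bijective e ∧ ∃ i : Fin n,
    (∀ j : Fin n, j ≠ i → e (D.x j) = D.x j) ∧
    ∃ (α : k) (f : A), α ≠ 0 ∧
      f ∈ NonUnitalAlgebra.adjoin k (D.x '' {j | j ≠ i}) ∧
      e (D.x i) = α • D.x i + f


section Order
variable {X : Type*} [LinearOrder X]

theorem deg_pos (u : FreeMagma X) : 0 < deg u := by
  induction u using FreeMagma.rec with
  | of a => simp [deg]
  | mul u v ihu ihv => simp [deg]; omega

theorem wlt_irrefl (u : FreeMagma X) : ¬ wlt u u := by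
  induction u using FreeMagma.rec with
  | of a => simp [wlt]
  | mul u v ihu ihv =>
    simp only [wlt]
    push_neg
    exact ⟨le_refl _, fun _ => ⟨ihu, fun _ => ihv⟩⟩

theorem wlt_deg_le {u v : FreeMagma X} (h : wlt u v) : deg u ≤ deg v := by
  cases u with
  | of a => cases v with
    | of b => exact le_refl _
    | mul v₁ v₂ =>
      have := deg_pos v₁; have := deg_pos v₂; simp [deg]; omega
  | mul u₁ u₂ => cases v with
    | of b => exact absurd h (by simp [wlt])
    | mul v₁ v₂ => rcases h with h | ⟨h, _⟩ <;> omega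

theorem wlt_of_deg_lt {u v : FreeMagma X} (h : deg u < deg v) : wlt u v := by
  cases u with
  | of a => cases v with
    | of b => simp [deg] at h
    | mul v₁ v₂ => trivial
  | mul u₁ u₂ => cases v with
    | of b =>
      have := deg_pos u₁; have := deg_pos u₂; simp [deg] at h; omega
    | mul v₁ v₂ => exact Or.inl h

theorem wlt_trans : ∀ {u v w : FreeMagma X}, wlt u v → wlt v w → wlt u w := by
  suffices H : ∀ N : ℕ, ∀ u v w : FreeMagma X, deg u + deg v + deg w ≤ N →
      wlt u v → wlt v w → wlt u w by
    intro u v w h1 h2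
    exact H _ u v w le_rfl h1 h2
  intro N
  induction N with
  | zero => intro u v w h; have := deg_pos u; omega
  | succ N ih =>
    intro u v w hN huv hvw
    cases u with
    | of a => cases v with
      | of b => cases w with
        | of c => exact lt_trans huv hvw
        | mul w₁ w₂ => trivial
      | mul v₁ v₂ => cases w with
        | of c => exact absurd hvw (by simp [wlt])
        | mul w₁ w₂ => trivial
    | mul u₁ u₂ => cases v with
      | of b => exact absurd huv (by simp [wlt])
      | mul v₁ v₂ => cases w with
        | of c => exact absurd hvw (by simp [wlt])
        | mul w₁ w₂ =>
          rcases huv with h1 | ⟨h1, h1'⟩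
          · rcases hvw with h2 | ⟨h2, h2'⟩
            · exact Or.inl (lt_trans h1 h2)
            · exact Or.inl (h2 ▸ h1)
          · rcases hvw with h2 | ⟨h2, h2'⟩
            · exact Or.inl (h1 ▸ h2)
            · refine Or.inr ⟨h1.trans h2, ?_⟩
              have d1 := deg_pos u₂; have d2 := deg_pos v₂; have d3 := deg_pos w₂
              have d4 := deg_pos u₁; have d5 := deg_pos v₁; have d6 := deg_pos w₁
              rcases h1' with h | ⟨rfl, h⟩
              · rcases h2' with h' | ⟨rfl, h'⟩
                · left
                  refine ih u₁ v₁ w₁ ?_ h h'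
                  simp only [deg] at hN ⊢; omega
                · exact Or.inl h
              · rcases h2' with h' | ⟨rfl, h'⟩
                · exact Or.inl h'
                · refine Or.inr ⟨rfl, ih u₂ v₂ w₂ ?_ h h'⟩
                  simp only [deg] at hN ⊢; omega

theorem wlt_trichotomy : ∀ u v : FreeMagma X, wlt u v ∨ u = v ∨ wlt v u := by
  suffices H : ∀ N : ℕ, ∀ u v : FreeMagma X, deg u + deg v ≤ N →
      wlt u v ∨ u = v ∨ wlt v u by
    intro u v; exact H _ u v le_rfl
  intro N
  induction N with
  | zero => intro u v h; have := deg_pos u; omega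
  | succ N ih =>
    intro u v hN
    cases u with
    | of a => cases v with
      | of b =>
        rcases lt_trichotomy a b with h | h | h
        · exact Or.inl h
        · exact Or.inr (Or.inl (by rw [h]))
        · exact Or.inr (Or.inr h)
      | mul v₁ v₂ => exact Or.inl trivial
    | mul u₁ u₂ => cases v with
      | of b => exact Or.inr (Or.inr trivial)
      | mul v₁ v₂ =>
        rcases lt_trichotomy (deg (FreeMagma.mul u₁ u₂)) (deg (FreeMagma.mul v₁ v₂)) with h | h | h
        · exact Or.inl (Or.inl h)
        · have d1 := deg_pos u₂; have d2 := deg_pos v₂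
          rcases ih u₁ v₁ (by simp only [deg] at hN ⊢; omega) with h1 | h1 | h1
          · exact Or.inl (Or.inr ⟨h, Or.inl h1⟩)
          · rcases ih u₂ v₂ (by simp only [deg] at hN ⊢; have := deg_pos u₁; have := deg_pos v₁; omega) with h2 | h2 | h2
            · exact Or.inl (Or.inr ⟨h, Or.inr ⟨h1, h2⟩⟩)
            · exact Or.inr (Or.inl (by rw [h1, h2]))
            · exact Or.inr (Or.inr (Or.inr ⟨h.symm, Or.inr ⟨h1.symm, h2⟩⟩))
          · exact Or.inr (Or.inr (Or.inr ⟨h.symm, Or.inl h1⟩))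
        · exact Or.inr (Or.inr (Or.inl h))

theorem wlt_asymm {u v : FreeMagma X} (h : wlt u v) : ¬ wlt v u :=
  fun h' => wlt_irrefl u (wlt_trans h h') |>.elim

end Order

section Order2
variable {X : Type*} [LinearOrder X]

theorem wle_refl (u : FreeMagma X) : wle u u := Or.inr rfl

theorem wle_of_not_wlt {u v : FreeMagma X} (h : ¬ wlt u v) : wle v u := by
  rcases wlt_trichotomy u v with h' | h' | h'
  · exact absurd h' h
  · exact Or.inr h'.symm
  · exact Or.inl h'

theorem not_wlt_of_wle {u v : FreeMagma X} (h : wle u v) : ¬ wlt v u := by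
  rcases h with h | rfl
  · exact wlt_asymm h
  · exact wlt_irrefl u

theorem wle_trans {u v w : FreeMagma X} (h1 : wle u v) (h2 : wle v w) : wle u w := by
  rcases h1 with h1 | rfl
  · rcases h2 with h2 | rfl
    · exact Or.inl (wlt_trans h1 h2)
    · exact Or.inl h1
  · exact h2

theorem wlt_of_wle_of_wlt {u v w : FreeMagma X} (h1 : wle u v) (h2 : wlt v w) : wlt u w := by
  rcases h1 with h1 | rfl
  · exact wlt_trans h1 h2
  · exact h2

theorem wlt_of_wlt_of_wle {u v w : FreeMagma X} (h1 : wlt u v) (h2 : wle v w) : wlt u w := by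
  rcases h2 with h2 | rfl
  · exact wlt_trans h1 h2
  · exact h1

theorem wle_deg_le {u v : FreeMagma X} (h : wle u v) : deg u ≤ deg v := by
  rcases h with h | rfl
  · exact wlt_deg_le h
  · exact le_rfl

/-- `L2`: with equal total degrees, a strictly smaller left factor decides. -/
theorem wlt_mul_of_left {a b A B : FreeMagma X} (hdeg : deg a + deg b = deg A + deg B)
    (h : wlt a A) : wlt (a.mul b) (A.mul B) :=
  Or.inr ⟨by simp only [deg]; omega, Or.inl h⟩

theorem wlt_mul_of_right {a b B : FreeMagma X} (hdeg : deg b = deg B)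
    (h : wlt b B) : wlt (a.mul b) (a.mul B) :=
  Or.inr ⟨by simp only [deg]; omega, Or.inr ⟨rfl, h⟩⟩

/-- `L1`: strict monotonicity of `mul` in both arguments. -/
theorem wlt_mul_mul {a b A B : FreeMagma X} (h1 : wle a A) (h2 : wle b B)
    (h3 : ¬ (a = A ∧ b = B)) : wlt (a.mul b) (A.mul B) := by
  have d1 := wle_deg_le h1
  have d2 := wle_deg_le h2
  rcases lt_or_eq_of_le (Nat.add_le_add d1 d2) with hd | hd
  · exact wlt_of_deg_lt (by simp only [deg]; omega)
  · rcases h1 with h1 | rfl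
    · exact wlt_mul_of_left hd h1
    · rcases h2 with h2 | rfl
      · exact wlt_mul_of_right (by omega) h2
      · exact absurd ⟨rfl, rfl⟩ h3

theorem wle_mul_mul {a b A B : FreeMagma X} (h1 : wle a A) (h2 : wle b B) :
    wle (a.mul b) (A.mul B) := by
  by_cases h : a = A ∧ b = B
  · exact Or.inr (by rw [h.1, h.2])
  · exact Or.inl (wlt_mul_mul h1 h2 h)

open Classical in
/-- Ordered insertion of `v` into the comb of `u`; this is the leading word of the
product `uv` of good words. -/
noncomputable def ins : FreeMagma X → FreeMagma X → FreeMagma X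
  | .of a, v => (FreeMagma.of a).mul v
  | .mul u₁ u₂, v => if wlt v u₂ then (ins u₁ v).mul u₂ else (FreeMagma.mul u₁ u₂).mul v

theorem ins_of (a : X) (v : FreeMagma X) : ins (FreeMagma.of a) v = (FreeMagma.of a).mul v := rfl

theorem ins_mul_pos {u₁ u₂ v : FreeMagma X} (h : wlt v u₂) :
    ins (u₁.mul u₂) v = (ins u₁ v).mul u₂ := by rw [ins, if_pos h]

theorem ins_mul_neg {u₁ u₂ v : FreeMagma X} (h : ¬ wlt v u₂) :
    ins (u₁.mul u₂) v = (u₁.mul u₂).mul v := by rw [ins, if_neg h]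

theorem deg_ins (u v : FreeMagma X) : deg (ins u v) = deg u + deg v := by
  induction u using FreeMagma.rec with
  | of a => rfl
  | mul u₁ u₂ ih₁ ih₂ =>
    by_cases h : wlt v u₂
    · rw [ins_mul_pos h]; simp only [deg] at ih₁ ⊢; omega
    · rw [ins_mul_neg h]; simp only [deg]

/-- `ins u v` is good, and remains a valid left factor whenever `u` did. -/
theorem ins_good_aux {u : FreeMagma X} (hu : IsGood u) {v : FreeMagma X} (hv : IsGood v) :
    IsGood (ins u v) ∧
      ∀ c : FreeMagma X, IsGood (u.mul c) → ¬ wlt c v → IsGood ((ins u v).mul c) := by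
  induction u using FreeMagma.rec with
  | of a =>
    refine ⟨hv, fun c hc hcv => ?_⟩
    exact ⟨hv, hc, hcv⟩
  | mul u₁ u₂ ih₁ ih₂ =>
    by_cases h : wlt v u₂
    · have hu₁ : IsGood u₁ := by
        cases u₁ using FreeMagma.rec with
        | of a => trivial
        | mul a b _ _ => exact hu.1
      have hu₂ : IsGood u₂ := by
        cases u₁ using FreeMagma.rec with
        | of a => exact hu
        | mul a b _ _ => exact hu.2.1
      obtain ⟨hg, hext⟩ := ih₁ hu₁
      have hgood : IsGood ((ins u₁ v).mul u₂) := hext u₂ hu (wlt_asymm h)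
      rw [ins_mul_pos h]
      refine ⟨hgood, fun c hc hcv => ?_⟩
      have hcu₂ : ¬ wlt c u₂ := hc.2.2
      have hcg : IsGood c := hc.2.1
      exact ⟨hgood, hcg, hcu₂⟩
    · rw [ins_mul_neg h]
      refine ⟨⟨hu, hv, h⟩, fun c hc hcv => ?_⟩
      have hcg : IsGood c := hc.2.1
      exact ⟨⟨hu, hv, h⟩, hcg, hcv⟩

theorem ins_good {u v : FreeMagma X} (hu : IsGood u) (hv : IsGood v) : IsGood (ins u v) :=
  (ins_good_aux hu hv).1

/-- Lemma I : `ins u v ≤ u·v`. -/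
theorem ins_le_mul (u v : FreeMagma X) : wle (ins u v) (u.mul v) := by
  induction u using FreeMagma.rec with
  | of a => exact wle_refl _
  | mul u₁ u₂ ih₁ ih₂ =>
    by_cases h : wlt v u₂
    · rw [ins_mul_pos h]
      have h1 : wlt (ins u₁ v) (u₁.mul u₂) :=
        wlt_of_wle_of_wlt ih₁ (wlt_mul_mul (wle_refl u₁) (Or.inl h) (fun hh => wlt_irrefl u₂ (hh.2 ▸ h)))
      exact Or.inl (wlt_mul_of_left (by rw [deg_ins]; simp only [deg]; omega) h1)
    · rw [ins_mul_neg h]; exact wle_refl _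

/-- `M2`: strict monotonicity of `ins` in the second argument. -/
theorem ins_mono_right {v v' : FreeMagma X} (u : FreeMagma X) (h : wlt v v') :
    wlt (ins u v) (ins u v') := by
  rcases lt_or_eq_of_le (wlt_deg_le h) with hd | hd
  · exact wlt_of_deg_lt (by rw [deg_ins, deg_ins]; omega)
  · induction u using FreeMagma.rec with
    | of a => exact wlt_mul_of_right hd h
    | mul u₁ u₂ ih₁ ih₂ =>
      by_cases h1 : wlt v u₂
      · by_cases h2 : wlt v' u₂
        · rw [ins_mul_pos h1, ins_mul_pos h2]
          exact wlt_mul_of_left (by rw [deg_ins, deg_ins]; omega) ih₁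
        · rw [ins_mul_pos h1, ins_mul_neg h2]
          have hlt : wlt (ins u₁ v) ((u₁.mul u₂)) := by
            refine wlt_of_wle_of_wlt (ins_le_mul u₁ v) ?_
            exact wlt_mul_mul (wle_refl u₁) (Or.inl h1) (fun hh => wlt_irrefl u₂ (hh.2 ▸ h1))
          exact wlt_mul_of_left (by rw [deg_ins]; simp only [deg]; omega) hlt
      · by_cases h2 : wlt v' u₂
        · exact absurd (wlt_of_wlt_of_wle h2 (wle_of_not_wlt h1)) (wlt_asymm h)
        · rw [ins_mul_neg h1, ins_mul_neg h2]
          exact wlt_mul_of_right hd h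

theorem ins_mono_right_le {v v' : FreeMagma X} (u : FreeMagma X) (h : wle v v') :
    wle (ins u v) (ins u v') := by
  rcases h with h | rfl
  · exact Or.inl (ins_mono_right u h)
  · exact wle_refl _

end Order2


section Order3
variable {X : Type*} [LinearOrder X]

theorem isGood_of (a : X) : IsGood (FreeMagma.of a) := trivial

theorem isGood_mul_left {a b : FreeMagma X} (h : IsGood (a.mul b)) : IsGood a := by
  cases a using FreeMagma.rec with
  | of x => trivial
  | mul a₁ a₂ _ _ => exact h.1

theorem isGood_mul_right {a b : FreeMagma X} (h : IsGood (a.mul b)) : IsGood b := by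
  cases a using FreeMagma.rec with
  | of x => exact h
  | mul a₁ a₂ _ _ => exact h.2.1

theorem isGood_mul_last {a₁ a₂ b : FreeMagma X} (h : IsGood ((a₁.mul a₂).mul b)) :
    ¬ wlt b a₂ := h.2.2

theorem wlt_mul_elim {a b A B : FreeMagma X} (h : wlt (a.mul b) (A.mul B))
    (hd : deg a + deg b = deg A + deg B) : wlt a A ∨ (a = A ∧ wlt b B) := by
  rcases h with h | ⟨_, h⟩
  · simp only [deg] at h; omega
  · exact h

/-- Auxiliary comparison for monotonicity of `ins` in the first argument. -/
theorem p_aux (A : FreeMagma X) : ∀ (B v a b : FreeMagma X), IsGood (A.mul B) →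
    IsGood (a.mul b) → wlt (a.mul b) (A.mul B) → deg a + deg b = deg A + deg B →
    wlt v B → deg v = deg B → ¬ wlt v b → wle (a.mul b) (ins A v) := by
  have general : ∀ A B v a b : FreeMagma X,
      wlt (a.mul b) (A.mul B) → deg a + deg b = deg A + deg B →
      deg v = deg B → ¬ wlt v b → wle (a.mul b) (A.mul v) := by
    intro A B v a b hlt hdeg hdv hvb
    have hbv : wle b v := wle_of_not_wlt hvb
    have hdb : deg b ≤ deg v := wle_deg_le hbv
    rcases wlt_mul_elim hlt hdeg with h | ⟨rfl, h⟩
    · exact Or.inl (wlt_mul_of_left (by omega) h)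
    · rcases hbv with hbv | rfl
      · exact Or.inl (wlt_mul_of_right (by omega) hbv)
      · exact wle_refl _
  induction A using FreeMagma.rec with
  | of xA =>
    intro B v a b hWg hwg hlt hdeg hvB hdv hvb
    rw [ins_of]
    exact general _ B v a b hlt hdeg hdv hvb
  | mul A₁ A₂ ihA₁ ihA₂ =>
    intro B v a b hWg hwg hlt hdeg hvB hdv hvb
    have hdegA : deg (A₁.mul A₂) = deg A₁ + deg A₂ := rfl
    by_cases hins : wlt v A₂
    · rw [ins_mul_pos hins]
      have hBA₂ : ¬ wlt B A₂ := isGood_mul_last hWg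
      have hA₂B : wle A₂ B := wle_of_not_wlt hBA₂
      have hdA₂ : deg v = deg A₂ := le_antisymm (wlt_deg_le hins) (by
        have := wle_deg_le hA₂B; omega)
      have hbv : wle b v := wle_of_not_wlt hvb
      rcases wlt_mul_elim hlt hdeg with h | ⟨rfl, h⟩
      · -- a < A
        have hda : deg a ≤ deg A₁ + deg A₂ := by
          have := wlt_deg_le h; simp only [deg] at this; omega
        have hdb : deg b ≤ deg v := wle_deg_le hbv
        have hda' : deg a = deg A₁ + deg A₂ := by omega
        have hdb' : deg b = deg B := by omega
        cases a using FreeMagma.rec with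
        | of xa =>
          have := deg_pos A₁; have := deg_pos A₂
          simp only [deg] at hda'; omega
        | mul a₁ a₂ _ _ =>
          have hva₂ : ¬ wlt v a₂ := by
            have h1 : wle a₂ b := wle_of_not_wlt (isGood_mul_last hwg)
            exact not_wlt_of_wle (wle_trans h1 hbv)
          have hrec : wle (a₁.mul a₂) (ins A₁ v) := by
            refine ihA₁ A₂ v a₁ a₂ (isGood_mul_left hWg) (isGood_mul_left hwg) h ?_ hins hdA₂ hva₂
            simp only [deg] at hda'; omega
          refine wle_mul_mul hrec (Or.inl ?_)
          exact wlt_of_wle_of_wlt hbv hins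
      · -- a = A: impossible
        exfalso
        have h1 : wle A₂ b := wle_of_not_wlt (isGood_mul_last hwg)
        exact wlt_irrefl A₂ (wlt_of_wle_of_wlt (wle_trans h1 hbv) hins)
    · rw [ins_mul_neg hins]
      exact general _ B v a b hlt hdeg hdv hvb

/-- `M1`: strict monotonicity of `ins` in the first argument (for good words). -/
theorem ins_mono_left {w W : FreeMagma X} (v : FreeMagma X) (hw : IsGood w) (hW : IsGood W)
    (h : wlt w W) : wlt (ins w v) (ins W v) := by
  rcases lt_or_eq_of_le (wlt_deg_le h) with hd | hd
  · exact wlt_of_deg_lt (by rw [deg_ins, deg_ins]; omega)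
  · induction W using FreeMagma.rec generalizing w with
    | of xW =>
      cases w using FreeMagma.rec with
      | of xw => exact wlt_mul_of_left (by omega) h
      | mul w₁ w₂ _ _ =>
        have := deg_pos w₁; have := deg_pos w₂
        simp only [deg] at hd; omega
    | mul A B ihA ihB =>
      cases w using FreeMagma.rec with
      | of xw =>
        have := deg_pos A; have := deg_pos B
        simp only [deg] at hd; omega
      | mul a b _ _ =>
        have hdeg : deg a + deg b = deg A + deg B := by simp only [deg] at hd; omega
        have hlex := wlt_mul_elim h hdeg
        by_cases hvb : wlt v b <;> by_cases hvB : wlt v B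
        · -- both inserted
          rw [ins_mul_pos hvb, ins_mul_pos hvB]
          rcases hlex with hlex | ⟨rfl, hlex⟩
          · have hlef : wlt (ins a v) (ins A v) := by
              rcases lt_or_eq_of_le (wlt_deg_le hlex) with hda | hda
              · exact wlt_of_deg_lt (by rw [deg_ins, deg_ins]; omega)
              · exact ihA (isGood_mul_left hw) (isGood_mul_left hW) hlex hda
            exact wlt_mul_of_left (by rw [deg_ins, deg_ins]; omega) hlef
          · exact wlt_mul_of_right (by omega) hlex
        · -- v inserted into w only
          rw [ins_mul_pos hvb, ins_mul_neg hvB]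
          have hBv : wle B v := wle_of_not_wlt hvB
          rcases hlex with hlex | ⟨rfl, hlex⟩
          · have hdav : deg a + deg v ≤ deg A + deg B := by
              have h1 := wlt_deg_le hlex
              have h2 := wlt_deg_le hvb
              omega
            have hlef : wlt (ins a v) (A.mul B) := by
              rcases lt_or_eq_of_le hdav with hda | hda
              · exact wlt_of_deg_lt (by rw [deg_ins]; simp only [deg]; omega)
              · refine wlt_of_wle_of_wlt (ins_le_mul a v) ?_
                exact wlt_mul_of_left hda hlex
            exact wlt_mul_of_left (by rw [deg_ins]; simp only [deg]; omega) hlef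
          · exact absurd (wlt_of_wlt_of_wle (wlt_trans hvb hlex) hBv) (wlt_irrefl v)
        · -- v inserted into W only
          rw [ins_mul_neg hvb, ins_mul_pos hvB]
          have hbv : wle b v := wle_of_not_wlt hvb
          have hdv : deg v = deg B := by
            have h1 := wle_deg_le hbv
            have h2 := wlt_deg_le hvB
            have h3 : deg a ≤ deg A := by
              rcases hlex with hlex | ⟨rfl, _⟩
              · exact wlt_deg_le hlex
              · exact le_rfl
            omega
          have hp := p_aux A B v a b hW hw h hdeg hvB hdv hvb
          rcases hp with hp | hp
          · exact wlt_mul_of_left (by rw [deg_ins]; simp only [deg]; omega) hp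
          · rw [hp]
            exact wlt_mul_of_right (by omega) hvB
        · -- appended to both
          rw [ins_mul_neg hvb, ins_mul_neg hvB]
          exact wlt_mul_of_left (by simp only [deg]; omega) h

theorem ins_mono_left_le {w W : FreeMagma X} (v : FreeMagma X) (hw : IsGood w) (hW : IsGood W)
    (h : wle w W) : wle (ins w v) (ins W v) := by
  rcases h with h | rfl
  · exact Or.inl (ins_mono_left v hw hW h)
  · exact wle_refl _

end Order3

section WF
variable {X : Type*} [LinearOrder X] [Finite X]

theorem finite_deg_le (d : ℕ) : {w : FreeMagma X | deg w ≤ d}.Finite := by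
  induction d with
  | zero =>
    convert Set.finite_empty
    ext w
    simp only [Set.mem_setOf_eq, Set.mem_empty_iff_false, iff_false]
    have := deg_pos w; omega
  | succ d ih =>
    refine Set.Finite.subset ((Set.finite_range (FreeMagma.of (α := X))).union
      (Set.Finite.image2 FreeMagma.mul ih ih)) ?_
    intro w hw
    cases w using FreeMagma.rec with
    | of a => exact Or.inl ⟨a, rfl⟩
    | mul u v ih1 ih2 =>
      have h1 := deg_pos u; have h2 := deg_pos v
      simp only [Set.mem_setOf_eq, deg] at hw
      exact Or.inr ⟨u, by simp only [Set.mem_setOf_eq]; omega,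
        v, by simp only [Set.mem_setOf_eq]; omega, rfl⟩

theorem finite_wlt_lt (w : FreeMagma X) : {w' | wlt w' w}.Finite :=
  Set.Finite.subset (finite_deg_le (deg w)) (fun _ h => wlt_deg_le h)

theorem wlt_wf : WellFounded (wlt (X := X)) := by
  constructor
  suffices H : ∀ (m : ℕ) (w : FreeMagma X), {w' | wlt w' w}.ncard ≤ m → Acc wlt w by
    intro w; exact H _ w le_rfl
  intro m
  induction m with
  | zero =>
    intro w hw
    constructor
    intro y hy
    exfalso
    have h : {w' | wlt w' w} = ∅ := by
      rw [← Set.ncard_eq_zero (finite_wlt_lt w)]; omega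
    exact absurd (show y ∈ {w' | wlt w' w} from hy) (h ▸ Set.notMem_empty y)
  | succ m ih =>
    intro w hw
    constructor
    intro y hy
    refine ih y ?_
    have hss : {w' | wlt w' y} ⊂ {w' | wlt w' w} := by
      constructor
      · intro z hz; exact wlt_trans hz hy
      · intro hsub
        exact wlt_irrefl y (hsub hy)
    have := Set.ncard_lt_ncard hss (finite_wlt_lt w)
    omega

end WF

section Algebra

variable {k : Type*} [Field k] {n : ℕ} {A : Type*} [NonUnitalNonAssocRing A]
  [Module k A] [SMulCommClass k A A] [IsScalarTower k A A] (D : FreeRSData k n A)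

/-- `a` is supported on good words `≤ W`. -/
def Below (W : FreeMagma (Fin n)) (a : A) : Prop :=
  ∀ u : {w : FreeMagma (Fin n) // IsGood w}, ¬ wle u.1 W → D.basis.repr a u = 0

variable {D}

theorem below_mono {W W' : FreeMagma (Fin n)} {a : A} (h : Below D W a) (hW : wle W W') :
    Below D W' a :=
  fun u hu => h u (fun hle => hu (wle_trans hle hW))

theorem below_add {W : FreeMagma (Fin n)} {a b : A} (ha : Below D W a) (hb : Below D W b) :
    Below D W (a + b) := by
  intro u hu
  rw [map_add, Finsupp.add_apply, ha u hu, hb u hu, add_zero]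

theorem below_sub {W : FreeMagma (Fin n)} {a b : A} (ha : Below D W a) (hb : Below D W b) :
    Below D W (a - b) := by
  intro u hu
  rw [map_sub, Finsupp.sub_apply, ha u hu, hb u hu, sub_zero]

theorem below_basis {W : FreeMagma (Fin n)} {w : {w : FreeMagma (Fin n) // IsGood w}}
    (h : wle w.1 W) : Below D W (D.basis w) := by
  intro u hu
  rw [Module.Basis.repr_self]
  refine Finsupp.single_eq_of_ne ?_
  rintro rfl
  exact hu h

theorem below_wle_of_mem {W : FreeMagma (Fin n)} {a : A} (h : Below D W a)
    {u : {w : FreeMagma (Fin n) // IsGood w}} (hu : D.basis.repr a u ≠ 0) : wle u.1 W := by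
  by_contra hc
  exact hu (h u hc)

theorem repr_eq_zero_of_below {W : FreeMagma (Fin n)} {a : A}
    (h : Below D W a) {T : {w : FreeMagma (Fin n) // IsGood w}} (hT : wlt W T.1) :
    D.basis.repr a T = 0 := by
  refine h T (fun hle => ?_)
  exact wlt_irrefl T.1 (wlt_of_wle_of_wlt hle hT)

theorem mul_sum_decomp_left (a b : A) :
    a * b = ∑ u ∈ (D.basis.repr b).support, (D.basis.repr b u) • (a * D.basis u) := by
  conv_lhs => rw [← D.basis.linearCombination_repr b, Finsupp.linearCombination_apply,
    Finsupp.sum]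
  rw [Finset.mul_sum]
  exact Finset.sum_congr rfl fun u _ => mul_smul_comm _ _ _

theorem mul_sum_decomp_right (a b : A) :
    b * a = ∑ u ∈ (D.basis.repr b).support, (D.basis.repr b u) • (D.basis u * a) := by
  conv_lhs => rw [← D.basis.linearCombination_repr b, Finsupp.linearCombination_apply,
    Finsupp.sum]
  rw [Finset.sum_mul]
  exact Finset.sum_congr rfl fun u _ => smul_mul_assoc _ _ _

theorem below_mul_left {b : A} {W : FreeMagma (Fin n)} (a : A) {T : FreeMagma (Fin n)}
    (hb : Below D W b)
    (h : ∀ u : {w : FreeMagma (Fin n) // IsGood w}, wle u.1 W → Below D T (a * D.basis u)) :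
    Below D T (a * b) := by
  intro p hp
  rw [mul_sum_decomp_left (D := D) a b, map_sum, Finset.sum_apply']
  refine Finset.sum_eq_zero fun u hu => ?_
  rw [map_smul, Finsupp.smul_apply, smul_eq_mul,
    h u (below_wle_of_mem hb (Finsupp.mem_support_iff.mp hu)) p hp, mul_zero]

theorem below_mul_right {b : A} {W : FreeMagma (Fin n)} (a : A) {T : FreeMagma (Fin n)}
    (hb : Below D W b)
    (h : ∀ u : {w : FreeMagma (Fin n) // IsGood w}, wle u.1 W → Below D T (D.basis u * a)) :
    Below D T (b * a) := by
  intro p hp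
  rw [mul_sum_decomp_right (D := D) a b, map_sum, Finset.sum_apply']
  refine Finset.sum_eq_zero fun u hu => ?_
  rw [map_smul, Finsupp.smul_apply, smul_eq_mul,
    h u (below_wle_of_mem hb (Finsupp.mem_support_iff.mp hu)) p hp, mul_zero]

theorem repr_mul_right_eq {b : A} {W : FreeMagma (Fin n)} (a : A) (hW : IsGood W)
    (T : {w : FreeMagma (Fin n) // IsGood w}) (hb : Below D W b)
    (h0 : ∀ u : {w : FreeMagma (Fin n) // IsGood w}, wlt u.1 W →
      D.basis.repr (D.basis u * a) T = 0) :
    D.basis.repr (b * a) T =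
      D.basis.repr b ⟨W, hW⟩ * D.basis.repr (D.basis ⟨W, hW⟩ * a) T := by
  rw [mul_sum_decomp_right (D := D) a b, map_sum, Finset.sum_apply']
  rw [Finset.sum_eq_single (⟨W, hW⟩ : {w : FreeMagma (Fin n) // IsGood w})]
  · rw [map_smul, Finsupp.smul_apply, smul_eq_mul]
  · intro u hu hne
    rw [map_smul, Finsupp.smul_apply, smul_eq_mul]
    have hle : wle u.1 W := below_wle_of_mem hb (Finsupp.mem_support_iff.mp hu)
    have hlt : wlt u.1 W := by
      rcases hle with hlt | heq
      · exact hlt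
      · exact absurd (Subtype.ext heq) hne
    rw [h0 u hlt, mul_zero]
  · intro hnm
    rw [map_smul, Finsupp.smul_apply, smul_eq_mul,
      Finsupp.notMem_support_iff.mp hnm, zero_mul]

theorem repr_mul_left_eq {b : A} {W : FreeMagma (Fin n)} (a : A) (hW : IsGood W)
    (T : {w : FreeMagma (Fin n) // IsGood w}) (hb : Below D W b)
    (h0 : ∀ u : {w : FreeMagma (Fin n) // IsGood w}, wlt u.1 W →
      D.basis.repr (a * D.basis u) T = 0) :
    D.basis.repr (a * b) T =
      D.basis.repr b ⟨W, hW⟩ * D.basis.repr (a * D.basis ⟨W, hW⟩) T := by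
  rw [mul_sum_decomp_left (D := D) a b, map_sum, Finset.sum_apply']
  rw [Finset.sum_eq_single (⟨W, hW⟩ : {w : FreeMagma (Fin n) // IsGood w})]
  · rw [map_smul, Finsupp.smul_apply, smul_eq_mul]
  · intro u hu hne
    rw [map_smul, Finsupp.smul_apply, smul_eq_mul]
    have hle : wle u.1 W := below_wle_of_mem hb (Finsupp.mem_support_iff.mp hu)
    have hlt : wlt u.1 W := by
      rcases hle with hlt | heq
      · exact hlt
      · exact absurd (Subtype.ext heq) hne
    rw [h0 u hlt, mul_zero]
  · intro hnm
    rw [map_smul, Finsupp.smul_apply, smul_eq_mul,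
      Finsupp.notMem_support_iff.mp hnm, zero_mul]

end Algebra



section Main

variable {k : Type*} [Field k] {n : ℕ} {A : Type*} [NonUnitalNonAssocRing A]
  [Module k A] [SMulCommClass k A A] [IsScalarTower k A A] (D : FreeRSData k n A)

theorem bound : ∀ (u v : FreeMagma (Fin n)), IsGood u → IsGood v →
    Below D (ins u v) (evalWord D.x u * evalWord D.x v) := by
  have wf : WellFounded (fun p q : FreeMagma (Fin n) × FreeMagma (Fin n) =>
      wlt (p.1.mul p.2) (q.1.mul q.2)) := InvImage.wf _ wlt_wf
  suffices H : ∀ p : FreeMagma (Fin n) × FreeMagma (Fin n), IsGood p.1 → IsGood p.2 →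
      Below D (ins p.1 p.2) (evalWord D.x p.1 * evalWord D.x p.2) from
    fun u v hu hv => H (u, v) hu hv
  intro p
  refine wf.induction (C := fun p => IsGood p.1 → IsGood p.2 →
    Below D (ins p.1 p.2) (evalWord D.x p.1 * evalWord D.x p.2)) p ?_
  rintro ⟨u, v⟩ IH hu hv
  simp only at IH hu hv ⊢
  cases u using FreeMagma.rec with
  | of a =>
    have hg : IsGood ((FreeMagma.of a).mul v) := hv
    rw [show evalWord D.x (FreeMagma.of a) * evalWord D.x v =
      D.basis ⟨(FreeMagma.of a).mul v, hg⟩ from (D.basis_eq ⟨(FreeMagma.of a).mul v, hg⟩).symm, ins_of]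
    exact below_basis (wle_refl _)
  | mul u₁ u₂ ihd1 ihd2 =>
    clear ihd1 ihd2
    have hu₁ : IsGood u₁ := isGood_mul_left hu
    have hu₂ : IsGood u₂ := isGood_mul_right hu
    by_cases hvu₂ : wlt v u₂
    · rw [ins_mul_pos hvu₂]
      have dp₁ := deg_pos u₁; have dp₂ := deg_pos u₂; have dpv := deg_pos v
      have hdm : deg (u₁.mul u₂) = deg u₁ + deg u₂ := rfl
      -- IH instances
      have hB23 : Below D (ins u₂ v) (evalWord D.x u₂ * evalWord D.x v) :=
        IH (u₂, v) (wlt_of_deg_lt (by simp only [deg]; omega)) hu₂ hv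
      have hBv2 : Below D (ins v u₂) (evalWord D.x v * evalWord D.x u₂) :=
        IH (v, u₂) (wlt_of_deg_lt (by simp only [deg]; omega)) hv hu₂
      have hB1v : Below D (ins u₁ v) (evalWord D.x u₁ * evalWord D.x v) :=
        IH (u₁, v) (wlt_of_deg_lt (by simp only [deg]; omega)) hu₁ hv
      have hu₁lt : wlt u₁ (ins u₁ v) := wlt_of_deg_lt (by rw [deg_ins]; omega)
      have inner : ∀ (w : {w : FreeMagma (Fin n) // IsGood w}), deg w.1 ≤ deg u₂ + deg v →
          Below D ((ins u₁ v).mul u₂) (evalWord D.x u₁ * D.basis w) := by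
        intro w hdw
        have hmes : wlt (u₁.mul w.1) ((u₁.mul u₂).mul v) := by
          rcases lt_or_eq_of_le hdw with h | h
          · exact wlt_of_deg_lt (by simp only [deg]; omega)
          · exact wlt_mul_of_left (by simp only [deg]; omega)
              (wlt_of_deg_lt (by simp only [deg]; omega))
        have hb := IH (u₁, w.1) hmes hu₁ w.2
        rw [D.basis_eq w]
        refine below_mono hb (wle_trans (ins_le_mul u₁ w.1) (Or.inl ?_))
        rcases lt_or_eq_of_le hdw with h | h
        · exact wlt_of_deg_lt (by simp only [deg, deg_ins]; omega)
        · exact wlt_mul_of_left (by simp only [deg, deg_ins]; omega) hu₁lt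
      have term1 : Below D ((ins u₁ v).mul u₂)
          (evalWord D.x u₁ * (evalWord D.x u₂ * evalWord D.x v)) :=
        below_mul_left _ hB23 (fun w hw => inner w (by
          have := wle_deg_le hw; rw [deg_ins] at this; omega))
      have term3 : Below D ((ins u₁ v).mul u₂)
          (evalWord D.x u₁ * (evalWord D.x v * evalWord D.x u₂)) :=
        below_mul_left _ hBv2 (fun w hw => inner w (by
          have := wle_deg_le hw; rw [deg_ins] at this; omega))
      have hIns : wlt (ins u₁ v) (u₁.mul u₂) :=
        wlt_of_wle_of_wlt (ins_le_mul u₁ v)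
          (wlt_mul_mul (wle_refl u₁) (Or.inl hvu₂) (fun h => wlt_irrefl u₂ (h.2 ▸ hvu₂)))
      have term2 : Below D ((ins u₁ v).mul u₂)
          ((evalWord D.x u₁ * evalWord D.x v) * evalWord D.x u₂) := by
        refine below_mul_right _ hB1v (fun w hw => ?_)
        have hdw : deg w.1 ≤ deg u₁ + deg v := by
          have := wle_deg_le hw; rw [deg_ins] at this; omega
        have hmes : wlt (w.1.mul u₂) ((u₁.mul u₂).mul v) := by
          rcases lt_or_eq_of_le hdw with h | h
          · exact wlt_of_deg_lt (by simp only [deg]; omega)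
          · exact wlt_mul_of_left (by simp only [deg]; omega)
              (wlt_of_wle_of_wlt hw hIns)
        have hb := IH (w.1, u₂) hmes w.2 hu₂
        rw [D.basis_eq w]
        exact below_mono hb (wle_trans (ins_le_mul w.1 u₂)
          (wle_mul_mul hw (wle_refl u₂)))
      have hexp : evalWord D.x (u₁.mul u₂) * evalWord D.x v =
          evalWord D.x u₁ * (evalWord D.x u₂ * evalWord D.x v) +
          ((evalWord D.x u₁ * evalWord D.x v) * evalWord D.x u₂ -
            evalWord D.x u₁ * (evalWord D.x v * evalWord D.x u₂)) := by
        have h := D.rightSymm (evalWord D.x u₁) (evalWord D.x u₂) (evalWord D.x v)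
        have h' := sub_eq_iff_eq_add.mp h
        show evalWord D.x u₁ * evalWord D.x u₂ * evalWord D.x v = _
        rw [h']; abel
      rw [hexp]
      exact below_add term1 (below_sub term2 term3)
    · have hg : IsGood ((u₁.mul u₂).mul v) := ⟨hu, hv, hvu₂⟩
      rw [ins_mul_neg hvu₂, show evalWord D.x (u₁.mul u₂) * evalWord D.x v =
        D.basis ⟨(u₁.mul u₂).mul v, hg⟩ from (D.basis_eq ⟨(u₁.mul u₂).mul v, hg⟩).symm]
      exact below_basis (wle_refl _)

theorem coeff : ∀ (u : FreeMagma (Fin n)), ∀ (v : FreeMagma (Fin n)), IsGood u → IsGood v →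
    ∀ (T : {w : FreeMagma (Fin n) // IsGood w}), T.1 = ins u v →
    D.basis.repr (evalWord D.x u * evalWord D.x v) T = 1 := by
  intro u
  induction u using FreeMagma.rec with
  | of a =>
    intro v hu hv T hT
    have hg : IsGood ((FreeMagma.of a).mul v) := hv
    have hTe : T = ⟨(FreeMagma.of a).mul v, hg⟩ := Subtype.ext (by rw [hT, ins_of])
    rw [show evalWord D.x (FreeMagma.of a) * evalWord D.x v =
      D.basis ⟨(FreeMagma.of a).mul v, hg⟩ from (D.basis_eq ⟨(FreeMagma.of a).mul v, hg⟩).symm, Module.Basis.repr_self, hTe,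
      Finsupp.single_eq_same]
  | mul u₁ u₂ ih1 ih2 =>
    intro v hu hv T hT
    have hu₁ : IsGood u₁ := isGood_mul_left hu
    have hu₂ : IsGood u₂ := isGood_mul_right hu
    by_cases hvu₂ : wlt v u₂
    · have dp₁ := deg_pos u₁; have dp₂ := deg_pos u₂; have dpv := deg_pos v
      have hT' : T.1 = (ins u₁ v).mul u₂ := by rw [hT, ins_mul_pos hvu₂]
      have hIvg : IsGood (ins u₁ v) := ins_good hu₁ hv
      have hTg : IsGood ((ins u₁ v).mul u₂) := (ins_good_aux hu₁ hv).2 u₂ hu (wlt_asymm hvu₂)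
      have hu₁lt : wlt u₁ (ins u₁ v) := wlt_of_deg_lt (by rw [deg_ins]; omega)
      have hexp : evalWord D.x (u₁.mul u₂) * evalWord D.x v =
          evalWord D.x u₁ * (evalWord D.x u₂ * evalWord D.x v) +
          ((evalWord D.x u₁ * evalWord D.x v) * evalWord D.x u₂ -
            evalWord D.x u₁ * (evalWord D.x v * evalWord D.x u₂)) := by
        have h := D.rightSymm (evalWord D.x u₁) (evalWord D.x u₂) (evalWord D.x v)
        have h' := sub_eq_iff_eq_add.mp h
        show evalWord D.x u₁ * evalWord D.x u₂ * evalWord D.x v = _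
        rw [h']; abel
      rw [hexp, map_add, map_sub, Finsupp.add_apply, Finsupp.sub_apply]
      have term1 : D.basis.repr (evalWord D.x u₁ *
          (evalWord D.x u₂ * evalWord D.x v)) T = 0 := by
        have hbel : Below D (u₁.mul (ins u₂ v))
            (evalWord D.x u₁ * (evalWord D.x u₂ * evalWord D.x v)) := by
          refine below_mul_left _ (bound D u₂ v hu₂ hv) (fun w hw => ?_)
          rw [D.basis_eq w]
          exact below_mono (bound D u₁ w.1 hu₁ w.2)
            (wle_trans (ins_le_mul _ _) (wle_mul_mul (wle_refl u₁) hw))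
        refine repr_eq_zero_of_below hbel ?_
        rw [hT']
        exact wlt_mul_of_left (by simp only [deg, deg_ins]; omega) hu₁lt
      have term3 : D.basis.repr (evalWord D.x u₁ *
          (evalWord D.x v * evalWord D.x u₂)) T = 0 := by
        have hbel : Below D (u₁.mul (ins v u₂))
            (evalWord D.x u₁ * (evalWord D.x v * evalWord D.x u₂)) := by
          refine below_mul_left _ (bound D v u₂ hv hu₂) (fun w hw => ?_)
          rw [D.basis_eq w]
          exact below_mono (bound D u₁ w.1 hu₁ w.2)
            (wle_trans (ins_le_mul _ _) (wle_mul_mul (wle_refl u₁) hw))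
        refine repr_eq_zero_of_below hbel ?_
        rw [hT']
        exact wlt_mul_of_left (by simp only [deg, deg_ins]; omega) hu₁lt
      have term2 : D.basis.repr ((evalWord D.x u₁ * evalWord D.x v) * evalWord D.x u₂) T
          = 1 := by
        have h0 : ∀ w : {w : FreeMagma (Fin n) // IsGood w}, wlt w.1 (ins u₁ v) →
            D.basis.repr (D.basis w * evalWord D.x u₂) T = 0 := by
          intro w hw
          rw [D.basis_eq w]
          refine repr_eq_zero_of_below (bound D w.1 u₂ w.2 hu₂) ?_
          rw [hT']
          exact wlt_of_wle_of_wlt (ins_le_mul w.1 u₂)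
            (wlt_mul_mul (Or.inl hw) (wle_refl u₂) (fun hh => wlt_irrefl _ (hh.1 ▸ hw)))
        rw [repr_mul_right_eq _ hIvg T (bound D u₁ v hu₁ hv) h0]
        have hfac1 : D.basis.repr (evalWord D.x u₁ * evalWord D.x v) ⟨ins u₁ v, hIvg⟩ = 1 :=
          ih1 v hu₁ hv ⟨ins u₁ v, hIvg⟩ rfl
        have hfac2 : D.basis.repr (D.basis ⟨ins u₁ v, hIvg⟩ * evalWord D.x u₂) T = 1 := by
          rw [D.basis_eq ⟨ins u₁ v, hIvg⟩]
          have hTe2 : T = ⟨(ins u₁ v).mul u₂, hTg⟩ := Subtype.ext hT'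
          rw [show evalWord D.x (ins u₁ v) * evalWord D.x u₂ =
            D.basis ⟨(ins u₁ v).mul u₂, hTg⟩ from (D.basis_eq ⟨(ins u₁ v).mul u₂, hTg⟩).symm,
            Module.Basis.repr_self, hTe2, Finsupp.single_eq_same]
        rw [hfac1, hfac2, one_mul]
      rw [term1, term2, term3]
      ring
    · have hg : IsGood ((u₁.mul u₂).mul v) := ⟨hu, hv, hvu₂⟩
      have hTe : T = ⟨(u₁.mul u₂).mul v, hg⟩ := Subtype.ext (by rw [hT, ins_mul_neg hvu₂])
      rw [show evalWord D.x (u₁.mul u₂) * evalWord D.x v =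
        D.basis ⟨(u₁.mul u₂).mul v, hg⟩ from (D.basis_eq ⟨(u₁.mul u₂).mul v, hg⟩).symm, Module.Basis.repr_self, hTe,
        Finsupp.single_eq_same]

end Main


/-- Corollary 2.7: for nonzero `f, g` in the free right-symmetric algebra,
`fg ≠ 0` and `overline{fg} = overline{f̄ ḡ}`. -/
theorem statement6 (k : Type*) [Field k] (n : ℕ) (A : Type*) [NonUnitalNonAssocRing A]
    [Module k A] [SMulCommClass k A A] [IsScalarTower k A A]
    (D : FreeRSData k n A) (f g : A) (hf : f ≠ 0) (hg : g ≠ 0)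
    (wf wg : FreeMagma (Fin n))
    (hwf : IsLeadingWord D f wf) (hwg : IsLeadingWord D g wg) :
    f * g ≠ 0 ∧ ∃ t : FreeMagma (Fin n),
      IsLeadingWord D (f * g) t ∧ IsLeadingWord D (evalWord D.x (wf.mul wg)) t := by
  obtain ⟨hwfg, hwfmem, hwfmax⟩ := hwf
  obtain ⟨hwgg, hwgmem, hwgmax⟩ := hwg
  have hfbelow : Below D wf f := by
    intro u hu
    by_contra hne
    rcases eq_or_ne u.1 wf with h | h
    · exact hu (Or.inr h)
    · exact hu (Or.inl (hwfmax u (Finsupp.mem_support_iff.mpr hne) h))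
  have hgbelow : Below D wg g := by
    intro u hu
    by_contra hne
    rcases eq_or_ne u.1 wg with h | h
    · exact hu (Or.inr h)
    · exact hu (Or.inl (hwgmax u (Finsupp.mem_support_iff.mpr hne) h))
  set T : {w : FreeMagma (Fin n) // IsGood w} := ⟨ins wf wg, ins_good hwfg hwgg⟩ with hTdef
  have hc : D.basis.repr f ⟨wf, hwfg⟩ ≠ 0 := Finsupp.mem_support_iff.mp hwfmem
  have hd : D.basis.repr g ⟨wg, hwgg⟩ ≠ 0 := Finsupp.mem_support_iff.mp hwgmem
  -- the coefficient of `T` in `f * g`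
  have step1 : D.basis.repr (f * g) T =
      D.basis.repr f ⟨wf, hwfg⟩ * D.basis.repr (D.basis ⟨wf, hwfg⟩ * g) T := by
    refine repr_mul_right_eq g hwfg T hfbelow (fun u hu => ?_)
    have hb : Below D (ins u.1 wg) (D.basis u * g) := by
      refine below_mul_left _ hgbelow (fun w hw => ?_)
      rw [D.basis_eq u, D.basis_eq w]
      exact below_mono (bound D u.1 w.1 u.2 w.2) (ins_mono_right_le u.1 hw)
    exact repr_eq_zero_of_below hb (ins_mono_left wg u.2 hwfg hu)
  have step2 : D.basis.repr (D.basis ⟨wf, hwfg⟩ * g) T =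
      D.basis.repr g ⟨wg, hwgg⟩ * D.basis.repr (D.basis ⟨wf, hwfg⟩ * D.basis ⟨wg, hwgg⟩) T := by
    refine repr_mul_left_eq _ hwgg T hgbelow (fun w hw => ?_)
    rw [D.basis_eq ⟨wf, hwfg⟩, D.basis_eq w]
    exact repr_eq_zero_of_below (bound D wf w.1 hwfg w.2) (ins_mono_right wf hw)
  have step3 : D.basis.repr (D.basis ⟨wf, hwfg⟩ * D.basis ⟨wg, hwgg⟩) T = 1 := by
    rw [D.basis_eq ⟨wf, hwfg⟩, D.basis_eq ⟨wg, hwgg⟩]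
    exact coeff D wf wg hwfg hwgg T rfl
  have hcoeff : D.basis.repr (f * g) T =
      D.basis.repr f ⟨wf, hwfg⟩ * D.basis.repr g ⟨wg, hwgg⟩ := by
    rw [step1, step2, step3, mul_one]
  have hcne : D.basis.repr (f * g) T ≠ 0 := by
    rw [hcoeff]; exact mul_ne_zero hc hd
  have hfgne : f * g ≠ 0 := by
    intro h
    rw [h, map_zero] at hcne
    exact hcne rfl
  have hfgbelow : Below D (ins wf wg) (f * g) := by
    refine below_mul_right g hfbelow (fun u hu => ?_)
    refine below_mul_left _ hgbelow (fun w hw => ?_)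
    rw [D.basis_eq u, D.basis_eq w]
    refine below_mono (bound D u.1 w.1 u.2 w.2)
      (wle_trans (ins_mono_right_le u.1 hw) (ins_mono_left_le wg u.2 hwfg hu))
  have hwgbound : Below D (ins wf wg) (evalWord D.x wf * evalWord D.x wg) :=
    bound D wf wg hwfg hwgg
  have hwgcoeff : D.basis.repr (evalWord D.x wf * evalWord D.x wg) T = 1 :=
    coeff D wf wg hwfg hwgg T rfl
  refine ⟨hfgne, ins wf wg, ?_, ?_⟩
  · refine ⟨ins_good hwfg hwgg, Finsupp.mem_support_iff.mpr hcne, fun u hu hune => ?_⟩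
    have := below_wle_of_mem hfgbelow (Finsupp.mem_support_iff.mp hu)
    rcases this with h | h
    · exact h
    · exact absurd h hune
  · have heval : evalWord D.x (wf.mul wg) = evalWord D.x wf * evalWord D.x wg := rfl
    rw [heval]
    refine ⟨ins_good hwfg hwgg, Finsupp.mem_support_iff.mpr (by rw [hwgcoeff]; exact one_ne_zero),
      fun u hu hune => ?_⟩
    have := below_wle_of_mem hwgbound (Finsupp.mem_support_iff.mp hu)
    rcases this with h | h
    · exact h
    · exact absurd h hune

end RS
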